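/- Let f : ℤ_p → ℚ_p be a continuous function and write f in terms of the Mahler expansion f(x) = Σ aₙ C(x,n), where C(x,n) is the binomial coefficient polynomial. Then f is continuous if and only if aₙ → 0 in ℚ_p, and moreover ‖f‖_∞ = sup_n |aₙ|_p. -/

import Mathlib

open Filter

/-- The binomial coefficient polynomial `C(x, n) = x (x-1) ⋯ (x-n+1) / n!`,
as a function `ℤ_p → ℚ_p`. -/
noncomputable def binomPoly (p : ℕ) [Fact p.Prime] (x : ℤ_[p]) (n : ℕ) : ℚ_[p] :=
  (∏ i ∈ Finset.range n, ((x : ℚ_[p]) - (i : ℚ_[p]))) / (n.factorial : ℚ_[p])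

/-- The Mahler coefficients of `f : ℤ_p → ℚ_p`:
`aₙ = Σ_{k=0}^{n} (-1)^(n-k) C(n,k) f(k)`. -/
noncomputable def mahlerCoeff (p : ℕ) [Fact p.Prime] (f : ℤ_[p] → ℚ_[p]) (n : ℕ) : ℚ_[p] :=
  ∑ k ∈ Finset.range (n + 1), (-1 : ℚ_[p]) ^ (n - k) * (n.choose k : ℚ_[p]) * f (k : ℤ_[p])

open scoped fwdDiff

instance padicInt_isBoundedSMul_padic {p : ℕ} [Fact p.Prime] : IsBoundedSMul ℤ_[p] ℚ_[p] :=
  IsBoundedSMul.of_norm_smul_le fun r x => by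
    rw [Algebra.smul_def, norm_mul, PadicInt.norm_def]
    rfl

/-- Product formula for the ascending Pochhammer polynomial evaluated at `y - n + 1`. -/
lemma ascPochhammer_eval_sub (R : Type*) [CommRing R] (y : R) (n : ℕ) :
    (ascPochhammer R n).eval (y - (n : R) + 1) = ∏ i ∈ Finset.range n, (y - (i : R)) := by
  induction n with
  | zero => simp
  | succ n ih =>
    rw [ascPochhammer_succ_left, Finset.prod_range_succ]
    have h1 : y - ((n + 1 : ℕ) : R) + 1 = y - (n : R) := by push_cast; ring
    have h2 : y - (n : R) + 1 = y - (n : R) + 1 := rfl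
    simp only [Polynomial.eval_mul, Polynomial.eval_comp, Polynomial.eval_add, Polynomial.eval_X,
      Polynomial.eval_one, h1]
    rw [ih]
    ring

/-- The `binomPoly` function agrees with Mathlib's `mahler` basis function. -/
lemma binomPoly_eq_mahler (p : ℕ) [Fact p.Prime] (x : ℤ_[p]) (n : ℕ) :
    binomPoly p x n = mahler n x := by
  have hfac : ((n.factorial : ℚ_[p])) ≠ 0 := by
    exact_mod_cast n.factorial_ne_zero
  have key : (∏ i ∈ Finset.range n, (x - (i : ℤ_[p]))) =
      n.factorial • Ring.choose x n := by
    rw [← Ring.descPochhammer_eq_factorial_smul_choose,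
      Polynomial.descPochhammer_smeval_eq_ascPochhammer,
      Polynomial.ascPochhammer_smeval_eq_eval, ascPochhammer_eval_sub]
  have key' : (∏ i ∈ Finset.range n, ((x : ℚ_[p]) - (i : ℚ_[p]))) =
      (n.factorial : ℚ_[p]) * ((Ring.choose x n : ℤ_[p]) : ℚ_[p]) := by
    have := congrArg (PadicInt.Coe.ringHom (p := p)) key
    rw [map_prod, map_nsmul] at this
    simp [nsmul_eq_mul] at this
    exact this
  rw [binomPoly, key', mahler_apply, mul_comm, mul_div_assoc, div_self hfac, mul_one]

/-- The Mahler coefficients agree with iterated forward differences at `0`. -/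
lemma mahlerCoeff_eq_fwdDiff (p : ℕ) [Fact p.Prime] (f : ℤ_[p] → ℚ_[p]) (n : ℕ) :
    mahlerCoeff p f n = (fwdDiff (1 : ℤ_[p]))^[n] f 0 := by
  rw [fwdDiff_iter_eq_sum_shift, mahlerCoeff]
  refine Finset.sum_congr rfl fun k _ => ?_
  have : ((0 : ℤ_[p]) + k • (1 : ℤ_[p])) = (k : ℤ_[p]) := by simp
  rw [this, zsmul_eq_mul]
  push_cast
  ring

/-- Mahler's theorem: for a continuous `f : ℤ_p → ℚ_p` the Mahler coefficients tend to
zero, `f` is given by its Mahler expansion `f(x) = Σ aₙ C(x,n)`, and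
`‖f‖_∞ = sup_n |aₙ|_p`.  Conversely, if the coefficients of a Mahler series tend to
zero, then its sum is continuous. -/
theorem mahler_expansion (p : ℕ) [Fact p.Prime] (f : ℤ_[p] → ℚ_[p])
    (hf : Continuous f) :
    Tendsto (mahlerCoeff p f) atTop (nhds 0) ∧
    (∀ x : ℤ_[p], f x = ∑' n : ℕ, mahlerCoeff p f n * binomPoly p x n) ∧
    ((⨆ x : ℤ_[p], ‖f x‖) = ⨆ n : ℕ, ‖mahlerCoeff p f n‖) ∧
    (∀ a : ℕ → ℚ_[p], Tendsto a atTop (nhds 0) →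
      Continuous fun x : ℤ_[p] => ∑' n : ℕ, a n * binomPoly p x n) := by
  set F : C(ℤ_[p], ℚ_[p]) := ⟨f, hf⟩ with hF
  have hcoeff : mahlerCoeff p f = fun n => (fwdDiff (1 : ℤ_[p]))^[n] (⇑F) 0 := by
    funext n; exact mahlerCoeff_eq_fwdDiff p f n
  have htend : Tendsto (mahlerCoeff p f) atTop (nhds 0) := by
    rw [hcoeff]; exact PadicInt.fwdDiff_tendsto_zero F
  refine ⟨htend, ?_, ?_, ?_⟩
  · -- Mahler expansion
    intro x
    have hs := (PadicInt.hasSum_mahler F).tsum_eq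
    have hFm : F = PadicInt.mahlerSeries (fun n => (fwdDiff (1 : ℤ_[p]))^[n] (⇑F) 0) := by
      rw [PadicInt.mahlerSeries]; exact hs.symm
    have hx : f x = PadicInt.mahlerSeries (fun n => (fwdDiff (1 : ℤ_[p]))^[n] (⇑F) 0) x := by
      conv_lhs => rw [show f x = F x from rfl, hFm]
    rw [hx, PadicInt.mahlerSeries_apply (hcoeff ▸ htend)]
    congr 1
    funext n
    rw [hcoeff, binomPoly_eq_mahler, Algebra.smul_def, mul_comm]
    rfl
  · -- norm equality
    have h1 : (⨆ x : ℤ_[p], ‖f x‖) = ‖F‖ := (F.norm_eq_iSup_norm).symm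
    have h2 : ‖F‖ = ‖PadicInt.mahlerEquiv ℚ_[p] F‖ := ((PadicInt.mahlerEquiv ℚ_[p]).norm_map F).symm
    rw [h1, h2, ← ZeroAtInftyContinuousMap.norm_toBCF_eq_norm,
      BoundedContinuousFunction.norm_eq_iSup_norm]
    congr 1
    funext n
    rw [hcoeff]
    rfl
  · -- converse: continuity of Mahler series
    intro a ha
    have : (fun x : ℤ_[p] => ∑' n : ℕ, a n * binomPoly p x n) = ⇑(PadicInt.mahlerSeries a) := by
      funext x
      rw [PadicInt.mahlerSeries_apply ha]
      congr 1
      funext n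
      rw [binomPoly_eq_mahler, Algebra.smul_def, mul_comm]
      rfl
    rw [this]
    exact (PadicInt.mahlerSeries a).continuous
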